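/- In Λ(2l), the triple Massey product ⟨α_{p₁}, β_{p₂}, α_{p₃}⟩ equals ((p₃−p₁)/(2(p₁+p₂+1)(p₂+p₃+1)))·[α_{p₁+p₂+p₃+1}]; in particular it is nonzero whenever p₁ ≠ p₃, so the free loop space LS^{2l} is not formal. -/

import Mathlib

namespace LoopSphereModel

noncomputable section

/-- Basis of the Sullivan model `Λ(2l) = Λ(y₁,x₁,y₂,x₂)` of the free loop space
`LS^{2l}`: `(e, a, p, f)` codes the monomial `y₁^e · x₁^a · y₂^p · x₂^f`
(`e, f ∈ {0,1}` since `y₁, x₂` are odd; `x₁, y₂` are even). -/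
abbrev Bas : Type := Bool × ℕ × ℕ × Bool

/-- The underlying ℚ-vector space of `Λ(2l)`. -/
abbrev Mod : Type := Bas →₀ ℚ

/-- The basis monomial `y₁^e x₁^a y₂^p x₂^f`. -/
def mon (b : Bas) : Mod := Finsupp.single b 1

/-- Degree of a basis monomial: `|y₁| = 2l-1`, `|x₁| = 2l`, `|y₂| = 4l-2`,
`|x₂| = 4l-1`. -/
def mdeg (l : ℕ) (b : Bas) : ℕ :=
  (if b.1 then 2 * l - 1 else 0) + b.2.1 * (2 * l) + b.2.2.1 * (4 * l - 2) +
    (if b.2.2.2 then 4 * l - 1 else 0)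

/-- The differential on basis monomials, obtained by extending
`dy₁ = dx₁ = 0`, `dx₂ = x₁²`, `dy₂ = -2x₁y₁` as a degree `+1` derivation:
`d(y₁^e x₁^a y₂^p x₂^f) = (-2p)·y₁ x₁^{a+1} y₂^{p-1} x₂^f` (only when `e = 0`)
`+ (-1)^e · y₁^e x₁^{a+2} y₂^p` (only when `f = 1`). -/
def dmon (b : Bas) : Mod :=
  (if b.1 then 0
    else (-(2 * (b.2.2.1 : ℚ))) • mon (true, b.2.1 + 1, b.2.2.1 - 1, b.2.2.2)) +
  (if b.2.2.2 then
      (if b.1 then (-1 : ℚ) else 1) • mon (b.1, b.2.1 + 2, b.2.2.1, false)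
    else 0)

/-- The differential of `Λ(2l)` as a linear map. -/
def dL : Mod →ₗ[ℚ] Mod :=
  Finsupp.lsum ℚ fun b => LinearMap.toSpanSingleton ℚ Mod (dmon b)

/-- Product of two basis monomials in the free graded-commutative algebra:
zero if an odd generator repeats, otherwise the reordered monomial with the
Koszul sign `(-1)^{e'·f}` (moving `y₁'` past `x₂^f`). -/
def monMul (b b' : Bas) : Mod :=
  if b.1 && b'.1 then 0
  else if b.2.2.2 && b'.2.2.2 then 0
  else (if b'.1 && b.2.2.2 then (-1 : ℚ) else 1) •
    mon (b.1 || b'.1, b.2.1 + b'.2.1, b.2.2.1 + b'.2.2.1, b.2.2.2 || b'.2.2.2)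

/-- The (graded-commutative) multiplication of `Λ(2l)`, extended bilinearly. -/
def mulF (x y : Mod) : Mod :=
  x.sum fun b c => y.sum fun b' c' => (c * c') • monMul b b'

/-- The cocycle `α_p := y₂^p x₁ - 2p · y₁ x₂ y₂^{p-1}`
(in canonical order `x₁ y₂^p - 2p · y₁ y₂^{p-1} x₂`). -/
def alphaEl (p : ℕ) : Mod :=
  mon (false, 1, p, false) - (2 * (p : ℚ)) • mon (true, 0, p - 1, true)

/-- The cocycle `β_p := y₁ y₂^p`. -/
def betaEl (p : ℕ) : Mod := mon (true, 0, p, false)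


/-- Bilinear version of `mulF`. -/
def Bmap : Mod →ₗ[ℚ] Mod →ₗ[ℚ] Mod :=
  Finsupp.lsum ℚ fun b => LinearMap.toSpanSingleton ℚ (Mod →ₗ[ℚ] Mod)
    (Finsupp.lsum ℚ fun b' => LinearMap.toSpanSingleton ℚ Mod (monMul b b'))

lemma mulF_eq (x y : Mod) : mulF x y = Bmap x y := by
  simp only [mulF, Bmap, Finsupp.lsum_apply, Finsupp.sum, LinearMap.sum_apply,
    LinearMap.toSpanSingleton_apply, LinearMap.smul_apply, Finset.smul_sum, smul_smul]

lemma Bmap_mon_mon (b b' : Bas) : Bmap (mon b) (mon b') = monMul b b' := by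
  simp [Bmap, mon, Finsupp.lsum_single, LinearMap.toSpanSingleton_apply]

lemma dL_mon (b : Bas) : dL (mon b) = dmon b := by
  simp [dL, mon, Finsupp.lsum_single, LinearMap.toSpanSingleton_apply]

lemma dL_apply_x1 (s : Mod) (n : ℕ) : dL s (false, 1, n, false) = 0 := by
  rw [dL, Finsupp.lsum_apply, Finsupp.sum_apply]
  refine Finset.sum_eq_zero fun b _ => ?_
  rcases b with ⟨e, a, p, f⟩
  rcases e <;> rcases f <;>
    simp [LinearMap.toSpanSingleton_apply, dmon, mon, Finsupp.smul_single,
      Finsupp.add_apply, Finsupp.single_apply, Prod.ext_iff]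

/-- The Massey representative equals the scalar multiple of `α_N` exactly. -/
lemma massey_rep (p₁ p₂ p₃ : ℕ) :
      -(mulF ((-(1 / (2 * ((p₁ : ℚ) + p₂ + 1)))) •
            mon (false, 0, p₁ + p₂ + 1, false)) (alphaEl p₃) -
          mulF (alphaEl p₁)
            ((-(1 / (2 * ((p₂ : ℚ) + p₃ + 1)))) •
              mon (false, 0, p₂ + p₃ + 1, false))) =
        (((p₃ : ℚ) - p₁) / (2 * ((p₁ : ℚ) + p₂ + 1) * ((p₂ : ℚ) + p₃ + 1))) •
            alphaEl (p₁ + p₂ + p₃ + 1) := by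
  simp only [alphaEl, mulF_eq, map_sub, map_smul, LinearMap.sub_apply,
    LinearMap.smul_apply, Bmap_mon_mon]
  rcases p₁ with _|n <;> rcases p₃ with _|m <;> simp [monMul, smul_smul]
  · -- zero.succ
    have h1 : ((p₂:ℚ) + 1) ≠ 0 := by positivity
    have h2 : ((p₂:ℚ) + ((m:ℚ)+1) + 1) ≠ 0 := by positivity
    simp only [show p₂ + (m+1) + 1 = p₂ + m + 2 from by omega,
      show p₂ + 1 + (m+1) = p₂ + m + 2 from by omega,
      show p₂ + 1 + m = p₂ + m + 1 from by omega,
      show p₂ + (m+1) = p₂ + m + 1 from by omega]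
    match_scalars <;> field_simp <;> ring
  · -- succ.zero
    have h1 : ((n:ℚ) + 1 + (p₂:ℚ) + 1) ≠ 0 := by positivity
    have h2 : ((p₂:ℚ) + 1) ≠ 0 := by positivity
    simp only [show n + 1 + (p₂+1) = n + p₂ + 2 from by omega,
      show n + 1 + p₂ + 1 = n + p₂ + 2 from by omega,
      show n + (p₂+1) = n + p₂ + 1 from by omega,
      show n + 1 + p₂ = n + p₂ + 1 from by omega]
    match_scalars <;> field_simp <;> ring
  · -- succ.succ
    have h1 : ((n:ℚ) + 1 + (p₂:ℚ) + 1) ≠ 0 := by positivity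
    have h2 : ((p₂:ℚ) + ((m:ℚ)+1) + 1) ≠ 0 := by positivity
    simp only [show n + 1 + (p₂+(m+1)+1) = n + p₂ + m + 3 from by omega,
      show n + (p₂+(m+1)+1) = n + p₂ + m + 2 from by omega,
      show n + 1 + p₂ + 1 + m = n + p₂ + m + 2 from by omega,
      show n + 1 + p₂ + 1 + (m+1) = n + p₂ + m + 3 from by omega,
      show n + 1 + p₂ + (m+1) + 1 = n + p₂ + m + 3 from by omega,
      show n + 1 + p₂ + (m+1) = n + p₂ + m + 2 from by omega]
    match_scalars <;> field_simp <;> ring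
/-- The triple Massey product `⟨α_{p₁}, β_{p₂}, α_{p₃}⟩` in the Sullivan model
`Λ(2l)` of `LS^{2l}` equals
`((p₃-p₁)/(2(p₁+p₂+1)(p₂+p₃+1)))·[α_{p₁+p₂+p₃+1}]`; in particular it is a
nonzero cohomology class whenever `p₁ ≠ p₃` (so the free loop space `LS^{2l}`
is not formal).  Here `S = -y₂^{p₁+p₂+1}/(2(p₁+p₂+1))`,
`T = -y₂^{p₂+p₃+1}/(2(p₂+p₃+1))` satisfy `α_{p₁}β_{p₂} = dS`,
`β_{p₂}α_{p₃} = dT`, and — since `|β_{p₂}|` is odd and `|α_{p₁}|` even — the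
Massey representative is `E = -(S·α_{p₃} - α_{p₁}·T)`. -/
theorem massey_alpha_beta_alpha : ∀ p₁ p₂ p₃ : ℕ,
    mulF (alphaEl p₁) (betaEl p₂) =
      dL ((-(1 / (2 * ((p₁ : ℚ) + p₂ + 1)))) •
        mon (false, 0, p₁ + p₂ + 1, false)) ∧
    mulF (betaEl p₂) (alphaEl p₃) =
      dL ((-(1 / (2 * ((p₂ : ℚ) + p₃ + 1)))) •
        mon (false, 0, p₂ + p₃ + 1, false)) ∧
    (∃ s,
      -(mulF ((-(1 / (2 * ((p₁ : ℚ) + p₂ + 1)))) •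
            mon (false, 0, p₁ + p₂ + 1, false)) (alphaEl p₃) -
          mulF (alphaEl p₁)
            ((-(1 / (2 * ((p₂ : ℚ) + p₃ + 1)))) •
              mon (false, 0, p₂ + p₃ + 1, false))) =
        (((p₃ : ℚ) - p₁) / (2 * ((p₁ : ℚ) + p₂ + 1) * ((p₂ : ℚ) + p₃ + 1))) •
            alphaEl (p₁ + p₂ + p₃ + 1) + dL s) ∧
    (p₁ ≠ p₃ →
      ¬ ∃ s,
        -(mulF ((-(1 / (2 * ((p₁ : ℚ) + p₂ + 1)))) •
              mon (false, 0, p₁ + p₂ + 1, false)) (alphaEl p₃) -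
            mulF (alphaEl p₁)
              ((-(1 / (2 * ((p₂ : ℚ) + p₃ + 1)))) •
                mon (false, 0, p₂ + p₃ + 1, false))) = dL s) := by
  intro p₁ p₂ p₃
  have hq1 : ((p₁:ℚ) + p₂ + 1) ≠ 0 := by positivity
  have hq2 : ((p₂:ℚ) + p₃ + 1) ≠ 0 := by positivity
  refine ⟨?_, ?_, ?_, ?_⟩
  · simp only [alphaEl, betaEl, mulF_eq, map_sub, map_smul, LinearMap.sub_apply,
      LinearMap.smul_apply, Bmap_mon_mon, dL_mon]
    simp [monMul, dmon, smul_smul]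
    rw [show ((p₁:ℚ) + ↑p₂ + 1)⁻¹ * 2⁻¹ * (2 * ((p₁:ℚ) + ↑p₂ + 1)) = 1 by
      field_simp, one_smul]
  · simp only [alphaEl, betaEl, mulF_eq, map_sub, map_smul, LinearMap.sub_apply,
      LinearMap.smul_apply, Bmap_mon_mon, dL_mon]
    simp [monMul, dmon, smul_smul]
    rw [show ((p₂:ℚ) + ↑p₃ + 1)⁻¹ * 2⁻¹ * (2 * ((p₂:ℚ) + ↑p₃ + 1)) = 1 by
      field_simp, one_smul]
  · exact ⟨0, by rw [massey_rep p₁ p₂ p₃, map_zero, add_zero]⟩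
  · rintro hne ⟨s, hs⟩
    rw [massey_rep p₁ p₂ p₃] at hs
    have h0 := congrArg (fun v : Mod => v (false, 1, p₁ + p₂ + p₃ + 1, false)) hs
    simp [alphaEl, mon, Finsupp.single_apply, dL_apply_x1] at h0
    rcases h0 with h0 | h0
    · exact hne (by exact_mod_cast (sub_eq_zero.mp h0).symm)
    · rcases h0 with h0 | h0
      · exact hq1 (by linarith [h0])
      · exact hq2 (by linarith [h0])


end

end LoopSphereModel
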